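/- arXiv:2101.07607 — 3 statements merged into one kernel-verified Lean document; each statement's English description precedes it below -/
import Mathlib

section
/- The function f(t) = e^{-t} / (-log(1 - e^{-t})) is nondecreasing on (0, ∞). -/
open Real Set

lemma key_log_ineq {x : ℝ} (hx0 : 0 < x) (hx1 : x < 1) :
    0 ≤ Real.log (1 - x) + x / (1 - x) := by
  have h1 : (0:ℝ) < 1 - x := by linarith
  have h2 := Real.log_le_sub_one_of_pos (show (0:ℝ) < (1 - x)⁻¹ by positivity)
  rw [Real.log_inv] at h2
  have h3 : (1 - x)⁻¹ - 1 = x / (1 - x) := by field_simp; ring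
  linarith

lemma f_hasDerivAt {t : ℝ} (ht : 0 < t) :
    HasDerivAt (fun t : ℝ => Real.exp (-t) / (-Real.log (1 - Real.exp (-t))))
      ((Real.exp (-t) * (Real.log (1 - Real.exp (-t)) + Real.exp (-t) / (1 - Real.exp (-t)))) /
        (-Real.log (1 - Real.exp (-t)))^2) t := by
  have he1 : Real.exp (-t) < 1 := by
    rw [Real.exp_lt_one_iff]; linarith
  have hpos : 0 < 1 - Real.exp (-t) := by linarith
  have hlt : 1 - Real.exp (-t) < 1 := by
    have := Real.exp_pos (-t); linarith
  have hlogneg : Real.log (1 - Real.exp (-t)) < 0 := Real.log_neg hpos hlt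
  have h1 : HasDerivAt (fun t : ℝ => Real.exp (-t)) (-Real.exp (-t)) t := by
    simpa using (hasDerivAt_neg t).exp
  have h2 : HasDerivAt (fun t : ℝ => 1 - Real.exp (-t)) (Real.exp (-t)) t := by
    have := (hasDerivAt_const t (1:ℝ)).sub h1; simp only [sub_neg_eq_add, zero_add] at this; exact this
  have h3 : HasDerivAt (fun t : ℝ => Real.log (1 - Real.exp (-t)))
      (Real.exp (-t) / (1 - Real.exp (-t))) t := h2.log (ne_of_gt hpos)
  have h4 : HasDerivAt (fun t : ℝ => -Real.log (1 - Real.exp (-t)))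
      (-(Real.exp (-t) / (1 - Real.exp (-t)))) t := h3.neg
  have hv : -Real.log (1 - Real.exp (-t)) ≠ 0 := by
    exact ne_of_gt (by linarith)
  have := h1.div h4 hv
  exact this.congr_deriv (by ring)

theorem f_monotoneOn :
    MonotoneOn (fun t : ℝ => Real.exp (-t) / (-Real.log (1 - Real.exp (-t))))
      (Set.Ioi 0) := by
  have hd : ∀ t ∈ interior (Set.Ioi (0:ℝ)),
      HasDerivAt (fun t : ℝ => Real.exp (-t) / (-Real.log (1 - Real.exp (-t))))
        ((Real.exp (-t) * (Real.log (1 - Real.exp (-t)) + Real.exp (-t) / (1 - Real.exp (-t)))) /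
          (-Real.log (1 - Real.exp (-t)))^2) t := by
    intro t ht
    rw [interior_Ioi] at ht
    exact f_hasDerivAt ht
  have hdiff : DifferentiableOn ℝ
      (fun t : ℝ => Real.exp (-t) / (-Real.log (1 - Real.exp (-t))))
      (interior (Set.Ioi (0:ℝ))) := fun t ht => (hd t ht).differentiableAt.differentiableWithinAt
  apply monotoneOn_of_deriv_nonneg (convex_Ioi 0)
  · have := hdiff.continuousOn
    rwa [interior_Ioi] at this
  · exact hdiff
  · intro t ht
    rw [(hd t ht).deriv]
    rw [interior_Ioi] at ht
    have ht : (0:ℝ) < t := ht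
    have he1 : Real.exp (-t) < 1 := by rw [Real.exp_lt_one_iff]; linarith
    have hx0 : 0 < Real.exp (-t) := Real.exp_pos _
    apply div_nonneg
    · exact mul_nonneg hx0.le (key_log_ineq hx0 he1)
    · positivity
end

section
/- As t → ∞, 1 - f(t) is asymptotically equivalent to e^{-t}/2, i.e. lim_{t→∞} (1 - f(t)) / (e^{-t}/2) = 1, where f(t) = e^{-t} / (-log(1 - e^{-t})). -/
open Real Filter

private lemma log_bound1 {x : ℝ} (h0 : 0 < x) (h1 : x < 1) :
    |(-Real.log (1 - x)) - x| ≤ x ^ 2 / (1 - x) := by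
  have hx : |x| < 1 := by rw [abs_of_pos h0]; exact h1
  have := Real.abs_log_sub_add_sum_range_le hx 1
  simp only [Finset.sum_range_one, pow_one] at this
  norm_num at this
  rw [abs_of_pos h0] at this
  calc |(-Real.log (1 - x)) - x| = |x + Real.log (1 - x)| := by
        rw [← abs_neg]; ring_nf
    _ ≤ x ^ 2 / (1 - x) := by norm_num at this ⊢; linarith [this]

private lemma log_bound2 {x : ℝ} (h0 : 0 < x) (h1 : x < 1) :
    |(-Real.log (1 - x)) - x - x ^ 2 / 2| ≤ x ^ 3 / (1 - x) := by
  have hx : |x| < 1 := by rw [abs_of_pos h0]; exact h1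
  have := Real.abs_log_sub_add_sum_range_le hx 2
  rw [abs_of_pos h0] at this
  calc |(-Real.log (1 - x)) - x - x ^ 2 / 2|
      = |(∑ i ∈ Finset.range 2, x ^ (i + 1) / (i + 1)) + Real.log (1 - x)| := by
        rw [← abs_neg]
        congr 1
        simp [Finset.sum_range_succ]
        ring
    _ ≤ x ^ (2 + 1) / (1 - x) := this
    _ = x ^ 3 / (1 - x) := by norm_num

private lemma tendsto_bound_aux (c : ℝ) :
    Tendsto (fun x : ℝ => c * x / (1 - x)) (nhdsWithin 0 (Set.Ioi 0)) (nhds 0) := by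
  have : Tendsto (fun x : ℝ => c * x / (1 - x)) (nhds 0) (nhds 0) := by
    have h : ContinuousAt (fun x : ℝ => c * x / (1 - x)) 0 := by
      apply ContinuousAt.div
      · fun_prop
      · fun_prop
      · norm_num
    simpa using h.tendsto
  exact this.mono_left nhdsWithin_le_nhds

private lemma tendsto_B :
    Tendsto (fun x : ℝ => (-Real.log (1 - x)) / x) (nhdsWithin 0 (Set.Ioi 0)) (nhds 1) := by
  have h0 : Tendsto (fun x : ℝ => (-Real.log (1 - x)) / x - 1)
      (nhdsWithin 0 (Set.Ioi 0)) (nhds 0) := by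
    apply squeeze_zero_norm' (a := fun x => 1 * x / (1 - x)) _ (tendsto_bound_aux 1)
    filter_upwards [Ioo_mem_nhdsGT_of_mem (by norm_num : (0:ℝ) ∈ Set.Ico 0 1)] with x hx
    obtain ⟨h0, h1⟩ := hx
    have hx0 : x ≠ 0 := ne_of_gt h0
    have : (-Real.log (1 - x)) / x - 1 = ((-Real.log (1 - x)) - x) / x := by
      field_simp
    rw [Real.norm_eq_abs, this, abs_div, abs_of_pos h0, div_le_iff₀ h0]
    calc |(-Real.log (1 - x)) - x| ≤ x ^ 2 / (1 - x) := log_bound1 h0 h1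
      _ = 1 * x / (1 - x) * x := by ring
  have := h0.add (tendsto_const_nhds : Tendsto (fun _ : ℝ => (1:ℝ)) (nhdsWithin 0 (Set.Ioi 0)) (nhds 1))
  simpa using this

private lemma tendsto_A :
    Tendsto (fun x : ℝ => ((-Real.log (1 - x)) - x) / (x ^ 2 / 2))
      (nhdsWithin 0 (Set.Ioi 0)) (nhds 1) := by
  have h0 : Tendsto (fun x : ℝ => ((-Real.log (1 - x)) - x) / (x ^ 2 / 2) - 1)
      (nhdsWithin 0 (Set.Ioi 0)) (nhds 0) := by
    apply squeeze_zero_norm' (a := fun x => 2 * x / (1 - x)) _ (tendsto_bound_aux 2)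
    filter_upwards [Ioo_mem_nhdsGT_of_mem (by norm_num : (0:ℝ) ∈ Set.Ico 0 1)] with x hx
    obtain ⟨h0, h1⟩ := hx
    have hx0 : x ≠ 0 := ne_of_gt h0
    have hx2 : (0:ℝ) < x ^ 2 / 2 := by positivity
    have : ((-Real.log (1 - x)) - x) / (x ^ 2 / 2) - 1
        = ((-Real.log (1 - x)) - x - x ^ 2 / 2) / (x ^ 2 / 2) := by
      field_simp
    rw [Real.norm_eq_abs, this, abs_div, abs_of_pos hx2, div_le_iff₀ hx2]
    calc |(-Real.log (1 - x)) - x - x ^ 2 / 2| ≤ x ^ 3 / (1 - x) := log_bound2 h0 h1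
      _ = 2 * x / (1 - x) * (x ^ 2 / 2) := by ring
  have := h0.add (tendsto_const_nhds : Tendsto (fun _ : ℝ => (1:ℝ)) (nhdsWithin 0 (Set.Ioi 0)) (nhds 1))
  simpa using this

private lemma tendsto_g :
    Tendsto (fun x : ℝ => (1 - x / (-Real.log (1 - x))) / (x / 2))
      (nhdsWithin 0 (Set.Ioi 0)) (nhds 1) := by
  have h := (tendsto_A.div tendsto_B one_ne_zero)
  rw [div_one] at h
  apply h.congr'
  filter_upwards [Ioo_mem_nhdsGT_of_mem (by norm_num : (0:ℝ) ∈ Set.Ico 0 1)] with x hx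
  obtain ⟨h0, h1⟩ := hx
  have hx0 : x ≠ 0 := ne_of_gt h0
  have hL : 0 < -Real.log (1 - x) := by
    have : Real.log (1 - x) < 0 := Real.log_neg (by linarith) (by linarith)
    linarith
  have hL' : Real.log (1 - x) ≠ 0 := ne_of_lt (by linarith)
  simp only [Pi.div_apply]
  field_simp [hL']
  ring

theorem one_sub_f_asymptotic :
    Tendsto (fun t : ℝ =>
        (1 - Real.exp (-t) / (-Real.log (1 - Real.exp (-t)))) / (Real.exp (-t) / 2))
      atTop (nhds 1) := by
  have hexp : Tendsto (fun t : ℝ => Real.exp (-t)) atTop (nhdsWithin 0 (Set.Ioi 0)) := by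
    apply tendsto_nhdsWithin_of_tendsto_nhds_of_eventually_within
    · exact Real.tendsto_exp_neg_atTop_nhds_zero
    · exact Eventually.of_forall fun t => Real.exp_pos _
  exact tendsto_g.comp hexp
end

section
/- The integral ∫_0^∞ (1 - f(t)) dt equals the Euler–Mascheroni constant γ, where f(t) = e^{-t} / (-log(1 - e^{-t})). -/
open Real Set MeasureTheory Filter

lemma aux_exp_lt_one {x : ℝ} (hx : 0 < x) : Real.exp (-x) < 1 := by
  rw [Real.exp_lt_one_iff]; linarith

lemma aux_sub_pos {x : ℝ} (hx : 0 < x) : 0 < 1 - Real.exp (-x) := by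
  linarith [aux_exp_lt_one hx]

lemma aux_sub_lt_one {x : ℝ} (hx : 0 < x) : 1 - Real.exp (-x) < 1 := by
  have := Real.exp_pos (-x); linarith

-- ∫_{Ioi 0} exp(-(c*x)) dx = 1/c
lemma integral_exp_neg_mul (c : ℝ) (hc : 0 < c) :
    ∫ x in Ioi (0:ℝ), Real.exp (-(c * x)) = 1 / c := by
  have hderiv : ∀ x ∈ Ioi (0:ℝ), HasDerivAt (fun x => -Real.exp (-(c * x)) / c)
      (Real.exp (-(c * x))) x := by
    intro x _
    have h1 : HasDerivAt (fun x : ℝ => -(c * x)) (-c) x := by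
      have := ((hasDerivAt_id x).const_mul c).neg
      rw [mul_one] at this
      exact this
    have h2 := (h1.exp).neg.div_const c
    refine h2.congr_deriv ?_
    field_simp
  have hint : IntegrableOn (fun x => Real.exp (-(c * x))) (Ioi (0:ℝ)) := by
    simpa [neg_mul] using exp_neg_integrableOn_Ioi (0:ℝ) hc
  have htend : Tendsto (fun x => -Real.exp (-(c * x)) / c) atTop (nhds 0) := by
    have : Tendsto (fun x : ℝ => c * x) atTop atTop :=
      Tendsto.const_mul_atTop hc tendsto_id
    have := (Real.tendsto_exp_neg_atTop_nhds_zero.comp this).neg.div_const c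
    simpa using this
  have hcont : ContinuousOn (fun x => -Real.exp (-(c * x)) / c) (Ici (0:ℝ)) := by
    fun_prop
  have := MeasureTheory.integral_Ioi_of_hasDerivAt_of_tendsto
    (hcont.continuousWithinAt (by simp)) hderiv hint htend
  rw [this]; simp [neg_div]

lemma integrableOn_exp_neg_mul (c : ℝ) (hc : 0 < c) :
    IntegrableOn (fun x => Real.exp (-(c * x))) (Ioi (0:ℝ)) := by
  simpa [neg_mul] using exp_neg_integrableOn_Ioi (0:ℝ) hc

lemma frullani_exp {a b : ℝ} (ha : 0 < a) (hab : a < b) :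
    IntegrableOn (fun x => (Real.exp (-(a * x)) - Real.exp (-(b * x))) / x) (Ioi (0:ℝ)) ∧
    ∫ x in Ioi (0:ℝ), (Real.exp (-(a * x)) - Real.exp (-(b * x))) / x = Real.log (b / a) := by
  set μ := volume.restrict (Ioi (0:ℝ)) with hμ
  set ν := volume.restrict (Ioc a b) with hν
  have hb : 0 < b := ha.trans hab
  -- integrability of (x,t) ↦ exp(-(t*x)) on μ.prod ν
  have hmeas : AEStronglyMeasurable (fun p : ℝ × ℝ => Real.exp (-(p.2 * p.1))) (μ.prod ν) := by
    apply Continuous.aestronglyMeasurable; fun_prop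
  have hprodset : ∀ᵐ p : ℝ × ℝ ∂(μ.prod ν), p ∈ (Ioi (0:ℝ)) ×ˢ (Ioc a b) := by
    rw [hμ, hν, Measure.prod_restrict]
    exact ae_restrict_mem (measurableSet_Ioi.prod measurableSet_Ioc)
  have hgint : Integrable (fun p : ℝ × ℝ => Real.exp (-(a * p.1))) (μ.prod ν) := by
    have h1 : Integrable (fun x : ℝ => Real.exp (-(a * x))) μ := integrableOn_exp_neg_mul a ha
    have h2 : Integrable (fun _ : ℝ => (1:ℝ)) ν := by
      rw [hν]
      exact integrableOn_const measure_Ioc_lt_top.ne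
    simpa using h1.mul_prod h2
  have hFint : Integrable (fun p : ℝ × ℝ => Real.exp (-(p.2 * p.1))) (μ.prod ν) := by
    refine hgint.mono' hmeas ?_
    filter_upwards [hprodset] with p hp
    rcases hp with ⟨hp1, hp2⟩
    rw [Real.norm_eq_abs, abs_of_pos (Real.exp_pos _)]
    apply Real.exp_le_exp.2
    have : a * p.1 ≤ p.2 * p.1 := mul_le_mul_of_nonneg_right hp2.1.le (le_of_lt hp1)
    linarith
  -- inner integral over t
  have hinner : ∀ x ∈ Ioi (0:ℝ),
      ∫ t, Real.exp (-(t * x)) ∂ν = (Real.exp (-(a * x)) - Real.exp (-(b * x))) / x := by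
    intro x hx
    have hx0 : (0:ℝ) < x := hx
    rw [hν, ← intervalIntegral.integral_of_le hab.le]
    have hd : ∀ t ∈ Set.uIcc a b, HasDerivAt (fun t => -Real.exp (-(t * x)) / x)
        (Real.exp (-(t * x))) t := by
      intro t _
      have h1 : HasDerivAt (fun t : ℝ => -(t * x)) (-x) t := by
        have := ((hasDerivAt_id t).mul_const x).neg
        rw [one_mul] at this
        exact this
      have h2 := (h1.exp).neg.div_const x
      refine h2.congr_deriv ?_
      field_simp
    rw [intervalIntegral.integral_eq_sub_of_hasDerivAt hd (by apply Continuous.intervalIntegrable; fun_prop)]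
    field_simp
    ring
  -- outer integral over t of 1/t
  have houter : ∀ t ∈ Ioc a b, ∫ x, Real.exp (-(t * x)) ∂μ = 1 / t := by
    intro t ht
    exact integral_exp_neg_mul t (ha.trans_le ht.1.le)
  have hswap := MeasureTheory.integral_integral_swap (f := fun x t => Real.exp (-(t * x)))
    (μ := μ) (ν := ν) hFint
  have hL : Integrable (fun x => ∫ t, Real.exp (-(t * x)) ∂ν) μ := hFint.integral_prod_left
  have heq : (fun x => ∫ t, Real.exp (-(t * x)) ∂ν)
      =ᵐ[μ] fun x => (Real.exp (-(a * x)) - Real.exp (-(b * x))) / x := by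
    rw [hμ]
    filter_upwards [ae_restrict_mem measurableSet_Ioi] with x hx
    exact hinner x hx
  constructor
  · exact (hL.congr heq : _)
  · have h1 : ∫ x, (Real.exp (-(a * x)) - Real.exp (-(b * x))) / x ∂μ
        = ∫ x, (∫ t, Real.exp (-(t * x)) ∂ν) ∂μ := (integral_congr_ae heq).symm
    rw [hμ] at h1 ⊢
    rw [h1, ← hμ, hswap]
    have h2 : ∫ t, (∫ x, Real.exp (-(t * x)) ∂μ) ∂ν = ∫ t, (1:ℝ) / t ∂ν := by
      rw [hν]
      apply setIntegral_congr_fun measurableSet_Ioc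
      intro t ht
      exact houter t ht
    rw [h2, hν, ← intervalIntegral.integral_of_le hab.le,
      integral_one_div (by intro h; rw [Set.mem_uIcc] at h; rcases h with h|h <;> linarith)]

lemma aux_h_nonneg {x : ℝ} (hx : 0 < x) :
    0 ≤ 1 / (1 - Real.exp (-x)) - 1 / x := by
  have h1 : 1 - Real.exp (-x) ≤ x := by
    have := Real.add_one_le_exp (-x); linarith
  have h2 := aux_sub_pos hx
  have := one_div_le_one_div_of_le h2 h1
  linarith

lemma aux_h_le_one {x : ℝ} (hx : 0 < x) :
    1 / (1 - Real.exp (-x)) - 1 / x ≤ 1 := by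
  have h2 := aux_sub_pos hx
  have h3 : (x + 1) * Real.exp (-x) ≤ 1 := by
    have h := Real.add_one_le_exp x
    have hp := Real.exp_pos (-x)
    calc (x + 1) * Real.exp (-x) ≤ Real.exp x * Real.exp (-x) := by
          apply mul_le_mul_of_nonneg_right (by linarith) hp.le
      _ = 1 := by rw [← Real.exp_add]; simp
  rw [div_sub_div _ _ (ne_of_gt h2) (ne_of_gt hx), div_le_one (by positivity)]
  nlinarith [Real.exp_pos (-x)]

lemma integral_I_eq :
    ∫ x in Ioi (0:ℝ), (Real.exp (-x) / (1 - Real.exp (-x)) - Real.exp (-x) / x)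
      = Real.eulerMascheroniConstant := by
  set I := ∫ x in Ioi (0:ℝ), (Real.exp (-x) / (1 - Real.exp (-x)) - Real.exp (-x) / x) with hI
  set R : ℕ → ℝ := fun n =>
    ∫ x in Ioi (0:ℝ), Real.exp (-(((n:ℝ) + 1) * x)) * (1 / (1 - Real.exp (-x)) - 1 / x)
    with hR
  have key : ∀ n : ℕ, 0 < n →
      I = ((harmonic n : ℝ) - Real.log ((n:ℝ) + 1)) + R n ∧ 0 ≤ R n ∧ R n ≤ 1 / ((n:ℝ) + 1) := by
    intro n hn
    have hn1 : (1:ℝ) < (n:ℝ) + 1 := by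
      have : (1:ℝ) ≤ (n:ℝ) := by exact_mod_cast hn
      linarith
    set A : ℝ → ℝ := fun x => (∑ i ∈ Finset.range n, Real.exp (-(((i:ℝ) + 1) * x)))
      - (Real.exp (-(1 * x)) - Real.exp (-(((n:ℝ) + 1) * x))) / x with hA
    set B : ℝ → ℝ := fun x =>
      Real.exp (-(((n:ℝ) + 1) * x)) * (1 / (1 - Real.exp (-x)) - 1 / x) with hB
    -- pointwise identity
    have hpt : ∀ x ∈ Ioi (0:ℝ),
        Real.exp (-x) / (1 - Real.exp (-x)) - Real.exp (-x) / x = A x + B x := by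
      intro x hx
      have hx0 : (0:ℝ) < x := hx
      set r := Real.exp (-x) with hr
      have hr1 : r < 1 := aux_exp_lt_one hx0
      have hrpow : ∀ k : ℕ, Real.exp (-(((k:ℝ) + 1) * x)) = r ^ (k + 1) := by
        intro k
        rw [hr, ← Real.exp_nat_mul]
        push_cast
        ring_nf
      have hsum : (∑ i ∈ Finset.range n, Real.exp (-(((i:ℝ) + 1) * x)))
          = r * ((r ^ n - 1) / (r - 1)) := by
        rw [← geom_sum_eq (by linarith : r ≠ 1), Finset.mul_sum]
        apply Finset.sum_congr rfl
        intro i _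
        rw [hrpow i, pow_succ]
        ring
      have hgeom : (r ^ n - 1) / (r - 1) = (1 - r ^ n) / (1 - r) := by
        rw [← neg_sub (1:ℝ) (r ^ n), ← neg_sub (1:ℝ) r, neg_div_neg_eq]
      simp only [hA, hB, hsum, hgeom, hrpow n, one_mul, ← hr]
      have h1r : 1 - r ≠ 0 := ne_of_gt (aux_sub_pos hx0)
      field_simp
      ring
    -- integrability pieces
    have hAsum_int : IntegrableOn
        (fun x => ∑ i ∈ Finset.range n, Real.exp (-(((i:ℝ) + 1) * x))) (Ioi (0:ℝ)) := by
      apply MeasureTheory.integrable_finset_sum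
      intro i _
      exact integrableOn_exp_neg_mul _ (by positivity)
    have hfru := frullani_exp (a := 1) (b := (n:ℝ) + 1) one_pos hn1
    have hA_int : IntegrableOn A (Ioi (0:ℝ)) := hAsum_int.sub hfru.1
    have hB_meas : AEStronglyMeasurable B (volume.restrict (Ioi (0:ℝ))) := by
      apply ContinuousOn.aestronglyMeasurable _ measurableSet_Ioi
      apply ContinuousOn.mul (by fun_prop)
      apply ContinuousOn.sub
      · apply ContinuousOn.div continuousOn_const (by fun_prop)
        intro x hx; exact ne_of_gt (aux_sub_pos hx)
      · apply ContinuousOn.div continuousOn_const (by fun_prop)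
        intro x hx; exact ne_of_gt hx
    have hB_bound : ∀ x ∈ Ioi (0:ℝ), ‖B x‖ ≤ Real.exp (-(((n:ℝ) + 1) * x)) := by
      intro x hx
      have hx0 : (0:ℝ) < x := hx
      rw [hB, Real.norm_eq_abs, abs_mul, abs_of_pos (Real.exp_pos _),
        abs_of_nonneg (aux_h_nonneg hx0)]
      have := mul_le_mul_of_nonneg_left (aux_h_le_one hx0)
        (Real.exp_pos (-(((n:ℝ) + 1) * x))).le
      simpa using this
    have hB_int : IntegrableOn B (Ioi (0:ℝ)) := by
      apply Integrable.mono' (integrableOn_exp_neg_mul ((n:ℝ) + 1) (by positivity)) hB_meas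
      filter_upwards [ae_restrict_mem measurableSet_Ioi] with x hx
      exact hB_bound x hx
    -- I = ∫A + ∫B
    have hsplit : I = (∫ x in Ioi (0:ℝ), A x) + R n := by
      rw [hI, setIntegral_congr_fun measurableSet_Ioi hpt, integral_add hA_int hB_int]
    -- ∫ A = harmonic n - log (n+1)
    have hAval : (∫ x in Ioi (0:ℝ), A x) = (harmonic n : ℝ) - Real.log ((n:ℝ) + 1) := by
      rw [hA]
      rw [integral_sub hAsum_int hfru.1, MeasureTheory.integral_finset_sum _
        (fun i _ => integrableOn_exp_neg_mul _ (by positivity)), hfru.2]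
      have : ∀ i ∈ Finset.range n, (∫ x in Ioi (0:ℝ), Real.exp (-(((i:ℝ) + 1) * x)))
          = 1 / ((i:ℝ) + 1) := fun i _ => integral_exp_neg_mul _ (by positivity)
      rw [Finset.sum_congr rfl this, div_one]
      congr 1
      rw [harmonic]
      push_cast
      simp [one_div]
    -- R n bounds
    have hR_nonneg : 0 ≤ R n := by
      apply setIntegral_nonneg measurableSet_Ioi
      intro x hx
      exact mul_nonneg (Real.exp_pos _).le (aux_h_nonneg hx)
    have hR_le : R n ≤ 1 / ((n:ℝ) + 1) := by
      have hstep : R n ≤ ∫ x in Ioi (0:ℝ), Real.exp (-(((n:ℝ) + 1) * x)) := by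
        apply setIntegral_mono_on hB_int (integrableOn_exp_neg_mul _ (by positivity))
          measurableSet_Ioi
        intro x hx
        have := hB_bound x hx
        rw [Real.norm_eq_abs, abs_le] at this
        exact this.2
      calc R n ≤ _ := hstep
        _ = 1 / ((n:ℝ) + 1) := integral_exp_neg_mul _ (by positivity)
    exact ⟨by rw [hsplit, hAval], hR_nonneg, hR_le⟩
  -- limit argument
  have hRlim : Tendsto R atTop (nhds 0) := by
    apply tendsto_of_tendsto_of_tendsto_of_le_of_le' tendsto_const_nhds
      tendsto_one_div_add_atTop_nhds_zero_nat
    · filter_upwards [eventually_gt_atTop 0] with n hn using (key n hn).2.1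
    · filter_upwards [eventually_gt_atTop 0] with n hn using (key n hn).2.2
  have h1 : Tendsto (fun n : ℕ => ((harmonic n : ℝ) - Real.log ((n:ℝ) + 1)) + R n) atTop
      (nhds (Real.eulerMascheroniConstant + 0)) :=
    Real.tendsto_harmonic_sub_log_add_one.add hRlim
  have h2 : Tendsto (fun _ : ℕ => I) atTop (nhds I) := tendsto_const_nhds
  have h3 : (fun n : ℕ => ((harmonic n : ℝ) - Real.log ((n:ℝ) + 1)) + R n) =ᶠ[atTop]
      fun _ : ℕ => I := by
    filter_upwards [eventually_gt_atTop 0] with n hn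
    exact ((key n hn).1).symm
  have := tendsto_nhds_unique (h1.congr' h3) h2
  rw [← this, add_zero]

noncomputable def phiSub : ℝ → ℝ := fun x => -Real.log (1 - Real.exp (-x))

lemma phiSub_exp {x : ℝ} (hx : 0 < x) : Real.exp (-(phiSub x)) = 1 - Real.exp (-x) := by
  rw [phiSub, neg_neg, Real.exp_log (aux_sub_pos hx)]

lemma phiSub_pos {x : ℝ} (hx : 0 < x) : 0 < phiSub x := by
  rw [phiSub]
  have := Real.log_neg (aux_sub_pos hx) (aux_sub_lt_one hx)
  linarith

lemma phiSub_invol {x : ℝ} (hx : 0 < x) : phiSub (phiSub x) = x := by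
  rw [phiSub, phiSub_exp hx]
  simp [Real.log_exp]

lemma phiSub_injOn : InjOn phiSub (Ioi (0:ℝ)) := by
  intro a ha b hb h
  have := congrArg phiSub h
  rwa [phiSub_invol ha, phiSub_invol hb] at this

lemma phiSub_image : phiSub '' Ioi (0:ℝ) = Ioi (0:ℝ) := by
  apply Subset.antisymm
  · rintro _ ⟨x, hx, rfl⟩
    exact phiSub_pos hx
  · intro y hy
    exact ⟨phiSub y, phiSub_pos hy, phiSub_invol hy⟩

lemma phiSub_hasDeriv {x : ℝ} (hx : 0 < x) :
    HasDerivAt phiSub (-(Real.exp (-x) / (1 - Real.exp (-x)))) x := by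
  have h1 : HasDerivAt (fun x : ℝ => 1 - Real.exp (-x)) (Real.exp (-x)) x := by
    have : HasDerivAt (fun x : ℝ => Real.exp (-x)) (Real.exp (-x) * (-1)) x :=
      HasDerivAt.exp (hasDerivAt_id x).neg
    simpa using this.const_sub 1
  have h2 := (h1.log (ne_of_gt (aux_sub_pos hx))).neg
  exact h2

theorem integral_one_sub_f_eq_eulerMascheroni :
    ∫ t in Set.Ioi (0 : ℝ),
        (1 - Real.exp (-t) / (-Real.log (1 - Real.exp (-t))))
      = Real.eulerMascheroniConstant := by
  have hsub := MeasureTheory.integral_image_eq_integral_abs_deriv_smul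
    (s := Ioi (0:ℝ)) (f := phiSub) (f' := fun x => -(Real.exp (-x) / (1 - Real.exp (-x))))
    measurableSet_Ioi (fun x hx => (phiSub_hasDeriv hx).hasDerivWithinAt) phiSub_injOn
    (fun t => 1 - Real.exp (-t) / (-Real.log (1 - Real.exp (-t))))
  rw [phiSub_image] at hsub
  rw [hsub, ← integral_I_eq]
  apply setIntegral_congr_fun measurableSet_Ioi
  intro x hx
  have hx0 : (0:ℝ) < x := hx
  have h1 : 1 - Real.exp (-(phiSub x)) = Real.exp (-x) := by
    rw [phiSub_exp hx0]; ring
  have habs : |(-(Real.exp (-x) / (1 - Real.exp (-x))))| = Real.exp (-x) / (1 - Real.exp (-x)) := by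
    rw [abs_neg, abs_of_nonneg (div_nonneg (Real.exp_pos _).le (aux_sub_pos hx0).le)]
  simp only []
  rw [smul_eq_mul, habs, phiSub_exp hx0]
  have h2 : 1 - (1 - Real.exp (-x)) = Real.exp (-x) := by ring
  rw [h2, Real.log_exp, neg_neg]
  have hs := aux_sub_pos hx0
  field_simp
end
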